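/- Let A ∈ ℝ^{m × D} and suppose |⟨A_{*,p}, A_{*,q}⟩| ≥ λ·ε/β for distinct columns p ≠ q, where λ > 2, ε ∈ (0,1), β ∈ (0,1], and D = d/β. Let W ∈ ℝ^{D × d} be the random matrix whose (j,i) entry equals σ_j√β for (i−1)/β < j ≤ i/β (with σ_1,…,σ_D independent Rademacher signs) and 0 otherwise. Then there exists a unit vector u ∈ ℝ^d such that Pr_W[ ‖AWu‖₂² ∉ [(1−ε)², (1+ε)²] ] ≥ 1/4. -/

import Mathlib

open Finset

set_option maxHeartbeats 1000000

/-- Large column inner product implies anti-concentration (Li–Liu Lemma 4): if two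
distinct columns of `A ∈ ℝ^{m×D}` with `D = d·b` (so `β = 1/b`) have inner product of
absolute value at least `λ ε/β = λ ε b`, then there is a unit vector `u ∈ ℝ^d` such
that, over uniform Rademacher signs `σ` defining the block matrix `W` (with entry
`(j,i)` equal to `σ_j √β` when `j` lies in the `i`-th block of length `b`),
`‖AWu‖₂² ∉ [(1−ε)², (1+ε)²]` with probability at least `1/4`. -/
theorem stmt_19 (m d b : ℕ) (hd : 0 < d) (hb : 0 < b)
    (A : Matrix (Fin m) (Fin (d * b)) ℝ)
    (lam ε : ℝ) (hlam : 2 < lam) (hε0 : 0 < ε) (hε1 : ε < 1)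
    (p q : Fin (d * b)) (hpq : p ≠ q)
    (hinner : |∑ k : Fin m, A k p * A k q| ≥ lam * ε * b) :
    ∃ u : Fin d → ℝ, (∑ i, (u i)^2 = 1) ∧
      (Nat.card {σ : Fin (d * b) → Bool //
          ¬ (∑ k : Fin m,
              ((A * Matrix.of (fun (j : Fin (d * b)) (i : Fin d) =>
                  if (j : ℕ) / b = (i : ℕ)
                  then (if σ j then (1:ℝ) else -1) * Real.sqrt (1 / b)
                  else 0)).mulVec u k)^2
              ∈ Set.Icc ((1 - ε)^2) ((1 + ε)^2))} : ℝ)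
        / 2^(d * b) ≥ 1/4 := by
  classical
  have hdiv : ∀ j : Fin (d*b), (j:ℕ)/b < d := by
    intro j
    rw [Nat.div_lt_iff_lt_mul hb]
    exact j.isLt
  set jd : Fin (d*b) → Fin d := fun j => ⟨(j:ℕ)/b, hdiv j⟩ with hjd
  set ip := jd p with hip
  set iq := jd q with hiq
  set c : ℝ := if ip = iq then 1 else Real.sqrt 2⁻¹ with hc
  have hc2 : c^2 = 1 ∨ c^2 = 2⁻¹ := by
    by_cases h : ip = iq
    · left; simp [hc, h]
    · right; rw [hc, if_neg h]; exact Real.sq_sqrt (by norm_num)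
  have hc2half : (2:ℝ)⁻¹ ≤ c^2 := by rcases hc2 with h | h <;> rw [h] <;> norm_num
  set u : Fin d → ℝ := fun i => if i = ip ∨ i = iq then c else 0 with hu
  have husum : ∑ i, (u i)^2 = 1 := by
    rw [← Finset.sum_subset (Finset.subset_univ ({ip, iq} : Finset (Fin d)))
      (by intro i _ h; simp only [Finset.mem_insert, Finset.mem_singleton] at h
          push_neg at h
          simp [hu, h.1, h.2])]
    by_cases h : ip = iq
    · rw [h]
      simp only [Finset.insert_eq_self.mpr (Finset.mem_singleton_self iq), Finset.sum_singleton]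
      simp [hu, hc, h]
    · rw [Finset.sum_pair h]
      have h1 : u ip = c := by simp [hu]
      have h2 : u iq = c := by simp [hu]
      rw [h1, h2]
      rcases hc2 with hcc | hcc
      · exfalso; rw [hc, if_neg h] at hcc
        have := Real.sq_sqrt (show (0:ℝ) ≤ 2⁻¹ by norm_num)
        rw [this] at hcc; norm_num at hcc
      · rw [hcc]; norm_num
  refine ⟨u, husum, ?_⟩
  set sg : Bool → ℝ := fun t => if t then (1:ℝ) else -1 with hsg
  set w : Fin (d*b) → ℝ := fun j => Real.sqrt (1/b) * u (jd j) with hw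
  set Wm : (Fin (d*b) → Bool) → Matrix (Fin (d*b)) (Fin d) ℝ := fun σ =>
    Matrix.of (fun (j : Fin (d * b)) (i : Fin d) =>
      if (j : ℕ) / b = (i : ℕ)
      then (if σ j then (1:ℝ) else -1) * Real.sqrt (1 / b)
      else 0) with hWm
  set E : (Fin (d*b) → Bool) → Fin m → ℝ := fun σ k => ∑ j, A k j * (sg (σ j) * w j) with hE
  set G : (Fin (d*b) → Bool) → ℝ := fun σ => ∑ k, (E σ k)^2 with hG
  have hmv : ∀ σ k, (A * Wm σ).mulVec u k = E σ k := by
    intro σ k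
    show ∑ i, (A * Wm σ) k i * u i = ∑ j, A k j * (sg (σ j) * w j)
    simp only [Matrix.mul_apply, Finset.sum_mul]
    rw [Finset.sum_comm]
    refine Finset.sum_congr rfl (fun j _ => ?_)
    rw [Finset.sum_eq_single (jd j)]
    · simp only [hWm, Matrix.of_apply, hjd]
      simp only [if_true, hsg, hw, hjd]
      ring
    · intro i _ hne
      have : (j:ℕ)/b ≠ (i:ℕ) := fun h => hne (Fin.ext (by simp [hjd, h.symm]))
      simp [hWm, this]
    · intro h; exact absurd (Finset.mem_univ _) h
  set upd : (Fin (d*b) → Bool) → Bool → Bool → (Fin (d*b) → Bool) := fun σ bp bq =>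
    Function.update (Function.update σ p bp) q bq with hupd
  have hupd_q : ∀ σ bp bq, upd σ bp bq q = bq := by
    intro σ bp bq; simp [hupd]
  have hupd_p : ∀ σ bp bq, upd σ bp bq p = bp := by
    intro σ bp bq
    simp only [hupd]
    rw [Function.update_of_ne hpq, Function.update_self]
  have hupd_ne : ∀ σ bp bq j, j ≠ p → j ≠ q → upd σ bp bq j = σ j := by
    intro σ bp bq j hjp hjq
    simp only [hupd]
    rw [Function.update_of_ne hjq, Function.update_of_ne hjp]
  have hEupd : ∀ σ bp bq k, E (upd σ bp bq) k
      = (∑ j ∈ (Finset.univ.erase q).erase p, A k j * (sg (σ j) * w j))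
        + (sg bq * (A k q * w q) + sg bp * (A k p * w p)) := by
    intro σ bp bq k
    have hq : q ∈ (Finset.univ : Finset (Fin (d*b))) := Finset.mem_univ q
    have hp : p ∈ (Finset.univ : Finset (Fin (d*b))).erase q :=
      Finset.mem_erase.mpr ⟨hpq, Finset.mem_univ p⟩
    have e1 : E (upd σ bp bq) k = ∑ j, A k j * (sg (upd σ bp bq j) * w j) := rfl
    rw [e1, ← Finset.add_sum_erase _ _ hq, ← Finset.add_sum_erase _ _ hp]
    rw [hupd_q, hupd_p]
    rw [Finset.sum_congr rfl (fun j hj => by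
      rw [hupd_ne σ bp bq j (Finset.mem_erase.mp hj).1
        (Finset.mem_erase.mp (Finset.mem_erase.mp hj).2).1])]
    ring
  have hcombo : ∀ σ, G (upd σ true true) + G (upd σ false false)
      - G (upd σ true false) - G (upd σ false true)
      = 8 * (w p * w q) * ∑ k, A k p * A k q := by
    intro σ
    simp only [hG]
    rw [← Finset.sum_add_distrib, ← Finset.sum_sub_distrib, ← Finset.sum_sub_distrib,
      Finset.mul_sum]
    refine Finset.sum_congr rfl (fun k _ => ?_)
    rw [hEupd, hEupd, hEupd, hEupd]
    norm_num [hsg]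
    ring
  have hbR : (0:ℝ) < b := by exact_mod_cast hb
  have hbne : (b:ℝ) ≠ 0 := ne_of_gt hbR
  have hup : u ip = c := by simp [hu]
  have huq : u iq = c := by simp [hu]
  have hwpq : w p * w q = (1/b) * c^2 := by
    simp only [hw]
    rw [← hip, ← hiq, hup, huq]
    rw [show Real.sqrt (1/(b:ℝ)) * c * (Real.sqrt (1/(b:ℝ)) * c)
        = (Real.sqrt (1/(b:ℝ)) * Real.sqrt (1/(b:ℝ))) * c^2 by ring,
      Real.mul_self_sqrt (by positivity)]
  have hmain : ∀ σ, ∃ bp bq : Bool,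
      G (upd σ bp bq) ∉ Set.Icc ((1-ε)^2) ((1+ε)^2) := by
    intro σ
    by_contra hcon
    push_neg at hcon
    have h1 := hcon true true
    have h2 := hcon false false
    have h3 := hcon true false
    have h4 := hcon false true
    rw [Set.mem_Icc] at h1 h2 h3 h4
    have hce := hcombo σ
    set S := ∑ k, A k p * A k q with hS
    have habs : |8 * (w p * w q) * S| ≤ 8 * ε := by
      rw [← hce, abs_le]
      have hid : 2*(1+ε)^2 - 2*(1-ε)^2 = 8*ε := by ring
      constructor
      · linarith [h1.2, h2.2, h3.1, h4.1]
      · linarith [h1.1, h2.1, h3.2, h4.2]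
    have e1 : |8 * (w p * w q) * S| = 8 * ((1/b)*c^2) * |S| := by
      rw [hwpq, abs_mul, abs_of_nonneg (by positivity : (0:ℝ) ≤ 8 * ((1/(b:ℝ))*c^2))]
    have e2 : 8 * ((1/b)*c^2) * |S| ≥ 8 * ((1/b)*c^2) * (lam*ε*b) :=
      mul_le_mul_of_nonneg_left hinner (by positivity)
    have e3 : 8 * ((1/(b:ℝ))*c^2) * (lam*ε*b) = 8*c^2*lam*ε := by
      field_simp
    have hlamε : 0 < lam*ε := mul_pos (by linarith) hε0
    have e4 : 8*c^2*lam*ε ≥ 4*lam*ε := by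
      nlinarith [mul_le_mul_of_nonneg_right hc2half (le_of_lt hlamε)]
    have e5 : 4*lam*ε > 8*ε := by nlinarith
    rw [e1] at habs
    rw [e3] at e2
    linarith [habs, e2, e4, e5]
  -- counting
  set Pred : (Fin (d*b) → Bool) → Prop := fun σ =>
    (∑ k : Fin m, ((A * Wm σ).mulVec u k)^2) ∈ Set.Icc ((1-ε)^2) ((1+ε)^2) with hPred
  have hPG : ∀ τ, Pred τ ↔ G τ ∈ Set.Icc ((1-ε)^2) ((1+ε)^2) := by
    intro τ
    have : (∑ k : Fin m, ((A * Wm τ).mulVec u k)^2) = G τ :=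
      Finset.sum_congr rfl (fun k _ => by rw [hmv])
    simp only [hPred]
    rw [this]
  choose f1 f2 hf using hmain
  set φ : (Fin (d*b) → Bool) → (Fin (d*b) → Bool) := fun σ => upd σ (f1 σ) (f2 σ) with hφ
  have hφbad : ∀ σ, ¬ Pred (φ σ) := fun σ => by rw [hPG]; exact hf σ
  have hφne : ∀ σ j, j ≠ p → j ≠ q → φ σ j = σ j := fun σ j h1 h2 => hupd_ne σ _ _ j h1 h2
  set bad : Finset (Fin (d*b) → Bool) := Finset.univ.filter (fun σ => ¬ Pred σ) with hbad
  have hfiber : ∀ a ∈ Finset.univ.image φ,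
      (Finset.univ.filter (fun σ => φ σ = a)).card ≤ 4 := by
    intro a _
    have hsub : (Finset.univ.filter (fun σ => φ σ = a))
        ⊆ Finset.univ.image (fun bb : Bool × Bool => upd a bb.1 bb.2) := by
      intro σ hσ
      have ha : φ σ = a := (Finset.mem_filter.mp hσ).2
      refine Finset.mem_image.mpr ⟨(σ p, σ q), Finset.mem_univ _, ?_⟩
      funext j
      by_cases hjq : j = q
      · subst hjq; exact hupd_q a _ _
      · by_cases hjp : j = p
        · subst hjp; exact hupd_p a _ _
        · rw [hupd_ne a _ _ j hjp hjq, ← ha, hφne σ j hjp hjq]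
    calc (Finset.univ.filter (fun σ => φ σ = a)).card
        ≤ (Finset.univ.image (fun bb : Bool × Bool => upd a bb.1 bb.2)).card :=
          Finset.card_le_card hsub
      _ ≤ (Finset.univ : Finset (Bool × Bool)).card := Finset.card_image_le
      _ = 4 := by simp
  have himg : Finset.univ.image φ ⊆ bad := by
    intro a ha
    obtain ⟨σ, _, rfl⟩ := Finset.mem_image.mp ha
    exact Finset.mem_filter.mpr ⟨Finset.mem_univ _, hφbad σ⟩
  have hcount : 2^(d*b) ≤ 4 * bad.card := by
    have h1 : (Finset.univ : Finset (Fin (d*b) → Bool)).card ≤ 4 * (Finset.univ.image φ).card :=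
      Finset.card_le_mul_card_image (f := φ) Finset.univ 4 hfiber
    have h2 : (Finset.univ : Finset (Fin (d*b) → Bool)).card = 2^(d*b) := by
      simp [Finset.card_univ]
    have h3 : (Finset.univ.image φ).card ≤ bad.card := Finset.card_le_card himg
    omega
  have hNat : Nat.card {σ : Fin (d*b) → Bool // ¬ Pred σ} = bad.card := by
    rw [Nat.card_eq_fintype_card, Fintype.card_subtype]
  show ((Nat.card {σ : Fin (d*b) → Bool // ¬ Pred σ} : ℝ)) / 2^(d*b) ≥ 1/4
  rw [hNat, ge_iff_le, le_div_iff₀ (by positivity : (0:ℝ) < 2^(d*b))]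
  have := (Nat.cast_le (α := ℝ)).mpr hcount
  push_cast at this ⊢
  linarith
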